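/- Let 2 ≤ k ≤ K be integers. Then in ℝ[A_K] one has the identities S(Δ_k^C) = (K−1)!·k·Δ_K^C and S(Δ_k^N) = (K−2)!·(k−1)·k·Δ_K^N. -/

import Mathlib

noncomputable section

namespace PRA

open FreeGroup

variable {α : Type*} [DecidableEq α]

/-- The endomorphism of the free group sending `x_i ↦ x_j x_i` and fixing other generators. -/
def lA (i j : α) : FreeGroup α →* FreeGroup α :=
  FreeGroup.lift fun p => if p = i then FreeGroup.of j * FreeGroup.of p else FreeGroup.of p

/-- The endomorphism of the free group sending `x_i ↦ x_j⁻¹ x_i` and fixing other generators. -/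
def lB (i j : α) : FreeGroup α →* FreeGroup α :=
  FreeGroup.lift fun p => if p = i then (FreeGroup.of j)⁻¹ * FreeGroup.of p else FreeGroup.of p

/-- The endomorphism of the free group sending `x_i ↦ x_i x_j` and fixing other generators. -/
def rA (i j : α) : FreeGroup α →* FreeGroup α :=
  FreeGroup.lift fun p => if p = i then FreeGroup.of p * FreeGroup.of j else FreeGroup.of p

/-- The endomorphism of the free group sending `x_i ↦ x_i x_j⁻¹` and fixing other generators. -/
def rB (i j : α) : FreeGroup α →* FreeGroup α :=
  FreeGroup.lift fun p => if p = i then FreeGroup.of p * (FreeGroup.of j)⁻¹ else FreeGroup.of p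

lemma lBA (i j : α) (h : i ≠ j) : (lB i j).comp (lA i j) = MonoidHom.id _ := by
  ext p
  by_cases hp : p = i
  · subst hp
    simp [lA, lB, Ne.symm h]
  · simp [lA, lB, hp]

lemma lAB (i j : α) (h : i ≠ j) : (lA i j).comp (lB i j) = MonoidHom.id _ := by
  ext p
  by_cases hp : p = i
  · subst hp
    simp [lA, lB, Ne.symm h]
  · simp [lA, lB, hp]

lemma rBA (i j : α) (h : i ≠ j) : (rB i j).comp (rA i j) = MonoidHom.id _ := by
  ext p
  by_cases hp : p = i
  · subst hp
    simp [rA, rB, Ne.symm h]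
  · simp [rA, rB, hp]

lemma rAB (i j : α) (h : i ≠ j) : (rA i j).comp (rB i j) = MonoidHom.id _ := by
  ext p
  by_cases hp : p = i
  · subst hp
    simp [rA, rB, Ne.symm h]
  · simp [rA, rB, hp]

/-- The Nielsen automorphism `L_{ij} : x_i ↦ x_j x_i` (defined to be `1` when `i = j`). -/
def nL (i j : α) : MulAut (FreeGroup α) :=
  if h : i = j then 1
  else MonoidHom.toMulEquiv (lA i j) (lB i j) (lBA i j h) (lAB i j h)

/-- The Nielsen automorphism `R_{ij} : x_i ↦ x_i x_j` (defined to be `1` when `i = j`). -/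
def nR (i j : α) : MulAut (FreeGroup α) :=
  if h : i = j then 1
  else MonoidHom.toMulEquiv (rA i j) (rB i j) (rBA i j h) (rAB i j h)

/-- The generating set of the group `A_k`: Nielsen automorphisms `L_{ij}^±`, `R_{ij}^±`
of `F_{k+1} = ⟨x_0, x_1, …, x_k⟩` with `i ≠ j` and `j ≠ 0`
(i.e. the C-generators, with `i = 0`, and the N-generators, with `i, j ≥ 1`). -/
def AgenSet (k : ℕ) : Set (MulAut (FreeGroup (Fin (k + 1)))) :=
  {φ | ∃ i j : Fin (k + 1), i ≠ j ∧ j ≠ 0 ∧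
    (φ = nL i j ∨ φ = (nL i j)⁻¹ ∨ φ = nR i j ∨ φ = (nR i j)⁻¹)}

/-- The group `A_k ≤ Aut(F_{k+1})`. -/
def Ak (k : ℕ) : Subgroup (MulAut (FreeGroup (Fin (k + 1)))) :=
  Subgroup.closure (AgenSet k)

lemma nL_mem {k : ℕ} (i j : Fin (k + 1)) (hj : j ≠ 0) : nL i j ∈ Ak k := by
  by_cases h : i = j
  · subst h
    rw [nL, dif_pos rfl]
    exact (Ak k).one_mem
  · exact Subgroup.subset_closure ⟨i, j, h, hj, Or.inl rfl⟩

lemma nR_mem {k : ℕ} (i j : Fin (k + 1)) (hj : j ≠ 0) : nR i j ∈ Ak k := by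
  by_cases h : i = j
  · subst h
    rw [nR, dif_pos rfl]
    exact (Ak k).one_mem
  · exact Subgroup.subset_closure ⟨i, j, h, hj, Or.inr (Or.inr (Or.inl rfl))⟩

/-- `L_{ij}` as an element of the group `A_k`. -/
def Lg {k : ℕ} (i j : Fin (k + 1)) (hj : j ≠ 0) : Ak k := ⟨nL i j, nL_mem i j hj⟩

/-- `R_{ij}` as an element of the group `A_k`. -/
def Rg {k : ℕ} (i j : Fin (k + 1)) (hj : j ≠ 0) : Ak k := ⟨nR i j, nR_mem i j hj⟩

end PRA
namespace PRA

/-- The `*`-operation on the real group ring `ℝ[G]`: the linear extension of `g ↦ g⁻¹`. -/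
def gstar {G : Type*} [Group G] (ξ : MonoidAlgebra ℝ G) : MonoidAlgebra ℝ G :=
  MonoidAlgebra.mapDomain (fun g : G => g⁻¹) ξ

/-- An element of `ℝ[G]` is a sum of squares if it equals `Σ_i ξ_i* ξ_i`
for finitely many `ξ_i ∈ ℝ[G]`. -/
def IsSOS {G : Type*} [Group G] (ξ : MonoidAlgebra ℝ G) : Prop :=
  ∃ (n : ℕ) (f : Fin n → MonoidAlgebra ℝ G), ξ = ∑ m : Fin n, gstar (f m) * f m

variable {K : ℕ}

/-- The partial Laplacian
`Δ_{ij} = (1−L_{ij})(1−L_{ij})* + (1−R_{ij})(1−R_{ij})* ∈ ℝ[A_K]`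
(for `i = j` both Nielsen automorphisms are `1` and `Δ_{ii} = 0`). -/
def Del (K : ℕ) (i j : Fin (K + 1)) (hj : j ≠ 0) : MonoidAlgebra ℝ (Ak K) :=
  (1 - MonoidAlgebra.of ℝ (Ak K) (Lg i j hj)) *
      gstar (1 - MonoidAlgebra.of ℝ (Ak K) (Lg i j hj)) +
    (1 - MonoidAlgebra.of ℝ (Ak K) (Rg i j hj)) *
      gstar (1 - MonoidAlgebra.of ℝ (Ak K) (Rg i j hj))

/-- The embedding of the index range `{1,…,m}` into `{0,1,…,K}` for `m ≤ K`. -/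
def idx {K m : ℕ} (h : m ≤ K) (s : Fin m) : Fin (K + 1) :=
  (Fin.castLE h s).succ

lemma idx_ne_zero {K m : ℕ} (h : m ≤ K) (s : Fin m) : idx h s ≠ 0 :=
  Fin.succ_ne_zero _

/-- `Δ_m^C = Σ_{s=1}^m Δ_{0s}`, as an element of `ℝ[A_K]`. -/
def DelC (K m : ℕ) (h : m ≤ K) : MonoidAlgebra ℝ (Ak K) :=
  ∑ s : Fin m, Del K 0 (idx h s) (idx_ne_zero h s)

/-- `Δ_m^N = Σ_{1 ≤ i,j ≤ m} Δ_{ij}`, as an element of `ℝ[A_K]`. -/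
def DelN (K m : ℕ) (h : m ≤ K) : MonoidAlgebra ℝ (Ak K) :=
  ∑ i : Fin m, ∑ j : Fin m, Del K (idx h i) (idx h j) (idx_ne_zero h j)

/-- The full non-normalized group Laplacian `Δ_K = Δ_K^C + Δ_K^N ∈ ℝ[A_K]`. -/
def DelFull (K : ℕ) : MonoidAlgebra ℝ (Ak K) :=
  DelC K K le_rfl + DelN K K le_rfl

end PRA
set_option linter.unusedSectionVars false

namespace PRA

variable {α : Type*} [DecidableEq α]

/-- The automorphism of the free group induced by a permutation of the generators. -/
def permAut (e : α ≃ α) : MulAut (FreeGroup α) := FreeGroup.freeGroupCongr e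

lemma permAut_apply_of (e : α ≃ α) (a : α) :
    permAut e (FreeGroup.of a) = FreeGroup.of (e a) := by
  simp [permAut]

lemma permAut_inv_apply_of (e : α ≃ α) (a : α) :
    (permAut e)⁻¹ (FreeGroup.of a) = FreeGroup.of (e.symm a) := by
  show ((permAut e).symm) (FreeGroup.of a) = _
  rw [permAut, FreeGroup.freeGroupCongr_symm]
  exact permAut_apply_of e.symm a

lemma nL_apply_of {i j : α} (h : i ≠ j) (a : α) :
    nL i j (FreeGroup.of a)
      = if a = i then FreeGroup.of j * FreeGroup.of a else FreeGroup.of a := by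
  rw [nL, dif_neg h]
  show lA i j (FreeGroup.of a) = _
  simp [lA]

lemma nR_apply_of {i j : α} (h : i ≠ j) (a : α) :
    nR i j (FreeGroup.of a)
      = if a = i then FreeGroup.of a * FreeGroup.of j else FreeGroup.of a := by
  rw [nR, dif_neg h]
  show rA i j (FreeGroup.of a) = _
  simp [rA]

lemma permAut_conj_nL (e : α ≃ α) (i j : α) :
    permAut e * nL i j * (permAut e)⁻¹ = nL (e i) (e j) := by
  by_cases h : i = j
  · subst h
    rw [nL, dif_pos rfl, nL, dif_pos rfl, mul_one, mul_inv_cancel]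
  · have h' : e i ≠ e j := fun hc => h (e.injective hc)
    apply MulEquiv.toMonoidHom_injective
    apply FreeGroup.ext_hom
    intro a
    show (permAut e) (nL i j ((permAut e)⁻¹ (FreeGroup.of a))) = nL (e i) (e j) (FreeGroup.of a)
    rw [permAut_inv_apply_of, nL_apply_of h, nL_apply_of h']
    by_cases ha : a = e i
    · rw [if_pos (by rw [ha, Equiv.symm_apply_apply]), if_pos ha, map_mul,
        permAut_apply_of, permAut_apply_of, ha, Equiv.apply_symm_apply]
    · rw [if_neg (fun hc => ha (by rw [← e.apply_symm_apply a, hc])), if_neg ha,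
        permAut_apply_of, Equiv.apply_symm_apply]

lemma permAut_conj_nR (e : α ≃ α) (i j : α) :
    permAut e * nR i j * (permAut e)⁻¹ = nR (e i) (e j) := by
  by_cases h : i = j
  · subst h
    rw [nR, dif_pos rfl, nR, dif_pos rfl, mul_one, mul_inv_cancel]
  · have h' : e i ≠ e j := fun hc => h (e.injective hc)
    apply MulEquiv.toMonoidHom_injective
    apply FreeGroup.ext_hom
    intro a
    show (permAut e) (nR i j ((permAut e)⁻¹ (FreeGroup.of a))) = nR (e i) (e j) (FreeGroup.of a)
    rw [permAut_inv_apply_of, nR_apply_of h, nR_apply_of h']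
    by_cases ha : a = e i
    · rw [if_pos (by rw [ha, Equiv.symm_apply_apply]), if_pos ha, map_mul,
        permAut_apply_of, permAut_apply_of, ha, Equiv.apply_symm_apply]
    · rw [if_neg (fun hc => ha (by rw [← e.apply_symm_apply a, hc])), if_neg ha,
        permAut_apply_of, Equiv.apply_symm_apply]

lemma conjA_mem {k : ℕ} (e : Fin (k + 1) ≃ Fin (k + 1)) (he : e 0 = 0)
    {ψ : MulAut (FreeGroup (Fin (k + 1)))} (hψ : ψ ∈ Ak k) :
    permAut e * ψ * (permAut e)⁻¹ ∈ Ak k := by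
  induction hψ using Subgroup.closure_induction with
  | mem x hx =>
      obtain ⟨i, j, hij, hj, hx⟩ := hx
      have hij' : e i ≠ e j := fun hc => hij (e.injective hc)
      have hj' : e j ≠ 0 := fun hc => hj (e.injective (by rw [hc, he]))
      rcases hx with rfl | rfl | rfl | rfl
      · exact Subgroup.subset_closure ⟨e i, e j, hij', hj', Or.inl (permAut_conj_nL e i j)⟩
      · refine Subgroup.subset_closure ⟨e i, e j, hij', hj', Or.inr (Or.inl ?_)⟩
        rw [← permAut_conj_nL e i j]; group
      · exact Subgroup.subset_closure
          ⟨e i, e j, hij', hj', Or.inr (Or.inr (Or.inl (permAut_conj_nR e i j)))⟩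
      · refine Subgroup.subset_closure ⟨e i, e j, hij', hj', Or.inr (Or.inr (Or.inr ?_))⟩
        rw [← permAut_conj_nR e i j]; group
  | one =>
      have h1 : permAut e * 1 * (permAut e)⁻¹ = 1 := by group
      rw [h1]; exact (Ak k).one_mem
  | mul x y _ _ ihx ihy =>
      have hmul : permAut e * (x * y) * (permAut e)⁻¹
          = (permAut e * x * (permAut e)⁻¹) * (permAut e * y * (permAut e)⁻¹) := by group
      rw [hmul]; exact (Ak k).mul_mem ihx ihy
  | inv x _ ihx =>
      have hinv : permAut e * x⁻¹ * (permAut e)⁻¹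
          = (permAut e * x * (permAut e)⁻¹)⁻¹ := by group
      rw [hinv]; exact (Ak k).inv_mem ihx

/-- The permutation of `{0, 1, …, K}` induced by a permutation of `{1, …, K}` fixing `0`. -/
def extPerm (K : ℕ) (σ : Equiv.Perm (Fin K)) : Equiv.Perm (Fin (K + 1)) :=
  (finSuccEquiv K).trans ((Equiv.optionCongr σ).trans (finSuccEquiv K).symm)

lemma extPerm_zero (K : ℕ) (σ : Equiv.Perm (Fin K)) : extPerm K σ 0 = 0 := by
  simp [extPerm]

/-- The action of a permutation `σ ∈ S_K` on `A_K` by conjugation by the automorphism of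
`F_{K+1}` permuting `x_1, …, x_K` according to `σ` and fixing `x_0`;
it satisfies `σ.L_{ij} = L_{σ(i)σ(j)}` and `σ.R_{ij} = R_{σ(i)σ(j)}`. -/
def conjPerm (K : ℕ) (σ : Equiv.Perm (Fin K)) (ψ : Ak K) : Ak K :=
  ⟨permAut (extPerm K σ) * (ψ : MulAut (FreeGroup (Fin (K + 1)))) * (permAut (extPerm K σ))⁻¹,
    conjA_mem (extPerm K σ) (extPerm_zero K σ) ψ.2⟩

/-- The symmetrization operator `S(ξ) = Σ_{σ ∈ S_K} σ.ξ` on `ℝ[A_K]`. -/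
def symmize (K : ℕ) (ξ : MonoidAlgebra ℝ (Ak K)) : MonoidAlgebra ℝ (Ak K) :=
  ∑ σ : Equiv.Perm (Fin K), MonoidAlgebra.mapDomain (conjPerm K σ) ξ

end PRA

namespace PRA17
open PRA Equiv Finsupp

section Count
variable {M : Type*} [AddCommGroup M] [Module ℝ M]

lemma nsmul_cancel {n : ℕ} (hn : n ≠ 0) {x y : M} (h : n • x = n • y) : x = y := by
  rw [← Nat.cast_smul_eq_nsmul ℝ, ← Nat.cast_smul_eq_nsmul ℝ] at h
  have h2 := congrArg (fun z => ((n : ℝ))⁻¹ • z) h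
  simpa [smul_smul, inv_mul_cancel₀ (show (n : ℝ) ≠ 0 from Nat.cast_ne_zero.mpr hn)] using h2

lemma sum_perm_apply {K : ℕ} (g : Fin K → M) (i₀ i₁ : Fin K) :
    ∑ σ : Equiv.Perm (Fin K), g (σ i₀) = ∑ σ : Equiv.Perm (Fin K), g (σ i₁) := by
  rw [← Equiv.sum_comp (Equiv.mulRight (Equiv.swap i₀ i₁))
    (fun σ : Equiv.Perm (Fin K) => g (σ i₁))]
  refine Finset.sum_congr rfl fun σ _ => ?_
  simp [Equiv.Perm.mul_apply]

lemma countC {K : ℕ} (hK : 1 ≤ K) (g : Fin K → M) (i₀ : Fin K) :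
    ∑ σ : Equiv.Perm (Fin K), g (σ i₀) = (K - 1).factorial • ∑ t, g t := by
  apply nsmul_cancel (n := K) (by omega)
  have h1 : ∑ i : Fin K, ∑ σ : Equiv.Perm (Fin K), g (σ i)
      = K • ∑ σ : Equiv.Perm (Fin K), g (σ i₀) := by
    rw [Finset.sum_congr rfl fun i _ => sum_perm_apply g i i₀]
    simp
  have h2 : ∑ i : Fin K, ∑ σ : Equiv.Perm (Fin K), g (σ i)
      = K.factorial • ∑ t, g t := by
    rw [Finset.sum_comm]
    rw [Finset.sum_congr rfl fun (σ : Equiv.Perm (Fin K)) _ => Equiv.sum_comp σ g]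
    simp [Fintype.card_perm]
  rw [← h1, h2]
  have h3 : K.factorial = K * (K - 1).factorial := by
    cases K with
    | zero => omega
    | succ n => simp [Nat.factorial_succ]
  rw [h3, mul_smul]

lemma exists_perm_pair {K : ℕ} {a b a' b' : Fin K} (hab : a ≠ b) (hab' : a' ≠ b') :
    ∃ τ : Equiv.Perm (Fin K), τ a = a' ∧ τ b = b' := by
  refine ⟨Equiv.swap (Equiv.swap a a' b) b' * Equiv.swap a a', ?_, ?_⟩
  · have h2 : a' ≠ Equiv.swap a a' b := fun hc =>
      hab ((Equiv.swap a a').injective ((Equiv.swap_apply_left a a').trans hc))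
    rw [Equiv.Perm.mul_apply, Equiv.swap_apply_left,
      Equiv.swap_apply_of_ne_of_ne h2 hab']
  · rw [Equiv.Perm.mul_apply, Equiv.swap_apply_left]

lemma sum_perm_pair {K : ℕ} (g : Fin K → Fin K → M) {a b a' b' : Fin K}
    (hab : a ≠ b) (hab' : a' ≠ b') :
    ∑ σ : Equiv.Perm (Fin K), g (σ a) (σ b)
      = ∑ σ : Equiv.Perm (Fin K), g (σ a') (σ b') := by
  obtain ⟨τ, h1, h2⟩ := exists_perm_pair hab' hab
  rw [← Equiv.sum_comp (Equiv.mulRight τ)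
    (fun σ : Equiv.Perm (Fin K) => g (σ a') (σ b'))]
  refine Finset.sum_congr rfl fun σ _ => ?_
  simp [Equiv.Perm.mul_apply, h1, h2]

lemma countN {K : ℕ} (hK : 2 ≤ K) (g : Fin K → Fin K → M) (hdiag : ∀ a, g a a = 0)
    {i₀ j₀ : Fin K} (hij : i₀ ≠ j₀) :
    ∑ σ : Equiv.Perm (Fin K), g (σ i₀) (σ j₀)
      = (K - 2).factorial • ∑ a, ∑ b, g a b := by
  have hpos : K * (K - 1) ≠ 0 := by
    have h := Nat.mul_pos (show 0 < K by omega) (show 0 < K - 1 by omega)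
    omega
  apply nsmul_cancel hpos
  have hA : ∑ p : Fin K × Fin K, ∑ σ : Equiv.Perm (Fin K), g (σ p.1) (σ p.2)
      = K.factorial • ∑ a, ∑ b, g a b := by
    rw [Finset.sum_comm]
    have h3 : ∀ σ : Equiv.Perm (Fin K),
        ∑ p : Fin K × Fin K, g (σ p.1) (σ p.2) = ∑ a, ∑ b, g a b := by
      intro σ
      have := Equiv.sum_comp (Equiv.prodCongr σ σ) (fun p : Fin K × Fin K => g p.1 p.2)
      simp only [Equiv.prodCongr_apply, Prod.map_fst, Prod.map_snd] at this
      rw [this, Fintype.sum_prod_type]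
    rw [Finset.sum_congr rfl fun σ _ => h3 σ]
    simp [Fintype.card_perm]
  have hB : ∑ p : Fin K × Fin K, ∑ σ : Equiv.Perm (Fin K), g (σ p.1) (σ p.2)
      = ∑ p ∈ (Finset.univ : Finset (Fin K)).offDiag,
          ∑ σ : Equiv.Perm (Fin K), g (σ p.1) (σ p.2) := by
    refine (Finset.sum_subset (Finset.subset_univ _) fun p _ hp => ?_).symm
    have hpd : p.1 = p.2 := by
      by_contra hne
      exact hp (Finset.mem_offDiag.mpr ⟨Finset.mem_univ _, Finset.mem_univ _, hne⟩)
    refine Finset.sum_eq_zero fun σ _ => ?_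
    rw [hpd]
    exact hdiag _
  have hConst : ∑ p ∈ (Finset.univ : Finset (Fin K)).offDiag,
      ∑ σ : Equiv.Perm (Fin K), g (σ p.1) (σ p.2)
      = (K * (K - 1)) • ∑ σ : Equiv.Perm (Fin K), g (σ i₀) (σ j₀) := by
    rw [Finset.sum_congr rfl fun p hp =>
      sum_perm_pair g (Finset.mem_offDiag.mp hp).2.2 hij]
    rw [Finset.sum_const]
    congr 1
    rw [Finset.offDiag_card, Finset.card_univ, Fintype.card_fin]
    cases K with
    | zero => rfl
    | succ n => rw [Nat.succ_sub_one, Nat.mul_succ, Nat.add_sub_cancel]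
  have hfac : K.factorial = (K * (K - 1)) * (K - 2).factorial := by
    obtain ⟨n, rfl⟩ : ∃ n, K = n + 2 := ⟨K - 2, by omega⟩
    rw [show n + 2 - 1 = n + 1 from rfl, show n + 2 - 2 = n from rfl,
      Nat.factorial_succ, Nat.factorial_succ]
    ring
  rw [← hConst, ← hB, hA, hfac, mul_smul]

end Count

section Alg
variable {K : ℕ}

/-- `conjPerm` as a monoid homomorphism. -/
def conjHom (K : ℕ) (σ : Equiv.Perm (Fin K)) : Ak K →* Ak K where
  toFun := conjPerm K σ
  map_one' := Subtype.ext (by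
    show permAut (extPerm K σ) * 1 * (permAut (extPerm K σ))⁻¹ = 1
    group)
  map_mul' x y := Subtype.ext (by
    show permAut (extPerm K σ) * ((x : MulAut (FreeGroup (Fin (K + 1)))) * y)
        * (permAut (extPerm K σ))⁻¹
      = (permAut (extPerm K σ) * x * (permAut (extPerm K σ))⁻¹)
        * (permAut (extPerm K σ) * y * (permAut (extPerm K σ))⁻¹)
    group)

/-- `Finsupp.mapDomain (conjPerm K σ)`, with source and target spelled as the
monoid algebra (so that ring operations elaborate with the monoid algebra instances). -/
noncomputable def md (K : ℕ) (σ : Equiv.Perm (Fin K)) (x : MonoidAlgebra ℝ (Ak K)) :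
    MonoidAlgebra ℝ (Ak K) :=
  MonoidAlgebra.mapDomain (conjPerm K σ) x

lemma md_add (σ : Equiv.Perm (Fin K)) (x y : MonoidAlgebra ℝ (Ak K)) :
    md K σ (x + y) = md K σ x + md K σ y :=
  MonoidAlgebra.mapDomain_add _ _ _

lemma md_sum {ι : Type*} (σ : Equiv.Perm (Fin K)) (s : Finset ι)
    (v : ι → MonoidAlgebra ℝ (Ak K)) :
    md K σ (∑ i ∈ s, v i) = ∑ i ∈ s, md K σ (v i) := by
  classical
  induction s using Finset.induction_on with
  | empty => simp only [Finset.sum_empty]; exact MonoidAlgebra.mapDomain_zero _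
  | insert a s ha ih => rw [Finset.sum_insert ha, Finset.sum_insert ha, md_add, ih]

lemma md_mul (σ : Equiv.Perm (Fin K)) (x y : MonoidAlgebra ℝ (Ak K)) :
    md K σ (x * y) = md K σ x * md K σ y :=
  MonoidAlgebra.mapDomain_mul (conjHom K σ) x y

lemma md_one (σ : Equiv.Perm (Fin K)) : md K σ 1 = 1 :=
  MonoidAlgebra.mapDomain_one (conjHom K σ)

lemma md_one_sub_of (σ : Equiv.Perm (Fin K)) (g : Ak K) :
    md K σ (1 - MonoidAlgebra.of ℝ (Ak K) g)
      = 1 - MonoidAlgebra.of ℝ (Ak K) (conjPerm K σ g) := by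
  have h' : md K σ (1 - MonoidAlgebra.of ℝ (Ak K) g)
      = md K σ 1 - md K σ (MonoidAlgebra.of ℝ (Ak K) g) :=
    eq_sub_of_add_eq (by rw [← md_add, sub_add_cancel])
  have h2 : md K σ (MonoidAlgebra.of ℝ (Ak K) g)
      = MonoidAlgebra.of ℝ (Ak K) (conjPerm K σ g) :=
    MonoidAlgebra.mapDomain_single
  rw [h', md_one, h2]

lemma gstar_one_sub {G : Type*} [Group G] (g : G) :
    gstar (1 - MonoidAlgebra.of ℝ G g) = 1 - MonoidAlgebra.of ℝ G g⁻¹ := by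
  have h' : gstar (1 - MonoidAlgebra.of ℝ G g)
      = gstar (1 : MonoidAlgebra ℝ G) - gstar (MonoidAlgebra.of ℝ G g) :=
    eq_sub_of_add_eq (by simp only [gstar]; rw [← MonoidAlgebra.mapDomain_add, sub_add_cancel])
  have h1 : gstar (1 : MonoidAlgebra ℝ G) = 1 := by
    show MonoidAlgebra.mapDomain (fun x : G => x⁻¹) (MonoidAlgebra.single 1 1) = _
    rw [MonoidAlgebra.mapDomain_single, inv_one]
    rfl
  have h2 : gstar (MonoidAlgebra.of ℝ G g) = MonoidAlgebra.of ℝ G g⁻¹ :=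
    MonoidAlgebra.mapDomain_single
  rw [h', h1, h2]

lemma Del_congr {i i' j j' : Fin (K + 1)} (hi : i = i') (hjj : j = j')
    (hj : j ≠ 0) (hj' : j' ≠ 0) : Del K i j hj = Del K i' j' hj' := by
  subst hi; subst hjj; rfl

lemma Del_self (i : Fin (K + 1)) (hj : i ≠ 0) : Del K i i hj = 0 := by
  have hL : Lg i i hj = 1 := Subtype.ext (by
    show nL i i = 1
    rw [nL, dif_pos rfl])
  have hR : Rg i i hj = 1 := Subtype.ext (by
    show nR i i = 1
    rw [nR, dif_pos rfl])
  have h1 : MonoidAlgebra.of ℝ (Ak K) (1 : Ak K) = 1 := map_one _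
  rw [Del, hL, hR, h1]
  simp

lemma md_Del (σ : Equiv.Perm (Fin K)) (i j : Fin (K + 1)) (hj : j ≠ 0)
    (hj' : extPerm K σ j ≠ 0) :
    md K σ (Del K i j hj) = Del K (extPerm K σ i) (extPerm K σ j) hj' := by
  have hL : conjPerm K σ (Lg i j hj) = Lg (extPerm K σ i) (extPerm K σ j) hj' :=
    Subtype.ext (permAut_conj_nL (extPerm K σ) i j)
  have hR : conjPerm K σ (Rg i j hj) = Rg (extPerm K σ i) (extPerm K σ j) hj' :=
    Subtype.ext (permAut_conj_nR (extPerm K σ) i j)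
  have hLinv : conjPerm K σ (Lg i j hj)⁻¹ = (conjPerm K σ (Lg i j hj))⁻¹ :=
    map_inv (conjHom K σ) _
  have hRinv : conjPerm K σ (Rg i j hj)⁻¹ = (conjPerm K σ (Rg i j hj))⁻¹ :=
    map_inv (conjHom K σ) _
  rw [Del, Del, gstar_one_sub, gstar_one_sub, gstar_one_sub, gstar_one_sub,
    md_add, md_mul, md_mul, md_one_sub_of, md_one_sub_of, md_one_sub_of, md_one_sub_of,
    hLinv, hRinv, hL, hR]

lemma extPerm_idx {m : ℕ} (h : m ≤ K) (σ : Equiv.Perm (Fin K)) (s : Fin m) :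
    extPerm K σ (idx h s) = idx le_rfl (σ (Fin.castLE h s)) := by
  show extPerm K σ (Fin.castLE h s).succ = (Fin.castLE le_rfl (σ (Fin.castLE h s))).succ
  rw [show Fin.castLE le_rfl (σ (Fin.castLE h s)) = σ (Fin.castLE h s) from rfl]
  simp [extPerm]

lemma md_DelC_term (σ : Equiv.Perm (Fin K)) {m : ℕ} (h : m ≤ K) (s : Fin m) :
    md K σ (Del K 0 (idx h s) (idx_ne_zero h s))
      = Del K 0 (idx le_rfl (σ (Fin.castLE h s)))
          (idx_ne_zero le_rfl (σ (Fin.castLE h s))) := by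
  have hj' : extPerm K σ (idx h s) ≠ 0 := by
    rw [extPerm_idx]; exact idx_ne_zero le_rfl _
  rw [md_Del σ _ _ _ hj']
  exact Del_congr (extPerm_zero K σ) (extPerm_idx h σ s) hj' _

lemma md_DelN_term (σ : Equiv.Perm (Fin K)) {m : ℕ} (h : m ≤ K) (i j : Fin m) :
    md K σ (Del K (idx h i) (idx h j) (idx_ne_zero h j))
      = Del K (idx le_rfl (σ (Fin.castLE h i))) (idx le_rfl (σ (Fin.castLE h j)))
          (idx_ne_zero le_rfl (σ (Fin.castLE h j))) := by
  have hj' : extPerm K σ (idx h j) ≠ 0 := by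
    rw [extPerm_idx]; exact idx_ne_zero le_rfl _
  rw [md_Del σ _ _ _ hj']
  exact Del_congr (extPerm_idx h σ i) (extPerm_idx h σ j) hj' _

lemma symmize_eq (ξ : MonoidAlgebra ℝ (Ak K)) :
    symmize K ξ = ∑ σ : Equiv.Perm (Fin K), md K σ ξ := rfl

end Alg
end PRA17

open PRA in
/-- For `2 ≤ k ≤ K`, in `ℝ[A_K]` one has
`S(Δ_k^C) = (K−1)!·k·Δ_K^C` and `S(Δ_k^N) = (K−2)!·(k−1)·k·Δ_K^N`. -/
theorem statement17 (K k : ℕ) (hk : 2 ≤ k) (hkK : k ≤ K) :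
    symmize K (DelC K k hkK) = (((K - 1).factorial * k : ℕ) : ℝ) • DelC K K le_rfl ∧
      symmize K (DelN K k hkK)
        = (((K - 2).factorial * ((k - 1) * k) : ℕ) : ℝ) • DelN K K le_rfl := by
  have hK2 : 2 ≤ K := le_trans hk hkK
  constructor
  · rw [Nat.cast_smul_eq_nsmul, PRA17.symmize_eq]
    have hterm : ∀ σ : Equiv.Perm (Fin K),
        PRA17.md K σ (DelC K k hkK)
          = ∑ s : Fin k, Del K 0 (idx le_rfl (σ (Fin.castLE hkK s)))
              (idx_ne_zero le_rfl (σ (Fin.castLE hkK s))) := by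
      intro σ
      rw [DelC, PRA17.md_sum]
      exact Finset.sum_congr rfl fun s _ => PRA17.md_DelC_term σ hkK s
    rw [Finset.sum_congr rfl fun σ _ => hterm σ, Finset.sum_comm]
    have hcount : ∀ s : Fin k,
        ∑ σ : Equiv.Perm (Fin K),
            Del K 0 (idx le_rfl (σ (Fin.castLE hkK s)))
              (idx_ne_zero le_rfl (σ (Fin.castLE hkK s)))
          = (K - 1).factorial • DelC K K le_rfl := fun s =>
      PRA17.countC (by omega)
        (fun t => Del K 0 (idx le_rfl t) (idx_ne_zero le_rfl t)) (Fin.castLE hkK s)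
    rw [Finset.sum_congr rfl fun s _ => hcount s, Finset.sum_const, Finset.card_univ,
      Fintype.card_fin, smul_smul, Nat.mul_comm]
  · rw [Nat.cast_smul_eq_nsmul, PRA17.symmize_eq]
    have hterm : ∀ σ : Equiv.Perm (Fin K),
        PRA17.md K σ (DelN K k hkK)
          = ∑ p : Fin k × Fin k,
              Del K (idx le_rfl (σ (Fin.castLE hkK p.1)))
                (idx le_rfl (σ (Fin.castLE hkK p.2)))
                (idx_ne_zero le_rfl (σ (Fin.castLE hkK p.2))) := by
      intro σ
      rw [DelN, PRA17.md_sum, Fintype.sum_prod_type]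
      refine Finset.sum_congr rfl fun i _ => ?_
      rw [PRA17.md_sum]
      exact Finset.sum_congr rfl fun j _ => PRA17.md_DelN_term σ hkK i j
    rw [Finset.sum_congr rfl fun σ _ => hterm σ, Finset.sum_comm]
    have hinner : ∀ p : Fin k × Fin k,
        ∑ σ : Equiv.Perm (Fin K),
            Del K (idx le_rfl (σ (Fin.castLE hkK p.1)))
              (idx le_rfl (σ (Fin.castLE hkK p.2)))
              (idx_ne_zero le_rfl (σ (Fin.castLE hkK p.2)))
          = if p.1 = p.2 then 0
            else (K - 2).factorial • DelN K K le_rfl := by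
      intro p
      by_cases hp : p.1 = p.2
      · rw [if_pos hp, hp]
        exact Finset.sum_eq_zero fun σ _ => PRA17.Del_self _ _
      · rw [if_neg hp]
        exact PRA17.countN hK2
          (fun a b => Del K (idx le_rfl a) (idx le_rfl b) (idx_ne_zero le_rfl b))
          (fun a => PRA17.Del_self _ _)
          (fun hc => hp (Fin.castLE_injective hkK hc))
    rw [Finset.sum_congr rfl fun p _ => hinner p]
    have hsub : ∑ p : Fin k × Fin k,
        (if p.1 = p.2 then (0 : MonoidAlgebra ℝ (Ak K))
          else (K - 2).factorial • DelN K K le_rfl)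
        = ∑ p ∈ (Finset.univ : Finset (Fin k)).offDiag,
            (if p.1 = p.2 then (0 : MonoidAlgebra ℝ (Ak K))
              else (K - 2).factorial • DelN K K le_rfl) := by
      refine (Finset.sum_subset (Finset.subset_univ _) fun p _ hp => ?_).symm
      have hpd : p.1 = p.2 := by
        by_contra hne
        exact hp (Finset.mem_offDiag.mpr ⟨Finset.mem_univ _, Finset.mem_univ _, hne⟩)
      rw [if_pos hpd]
    rw [hsub, Finset.sum_congr rfl fun p hp => if_neg (Finset.mem_offDiag.mp hp).2.2,
      Finset.sum_const, Finset.offDiag_card, Finset.card_univ, Fintype.card_fin,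
      smul_smul]
    congr 1
    have h1 : k * k - k = (k - 1) * k := by
      obtain ⟨n, rfl⟩ : ∃ n, k = n + 1 := ⟨k - 1, by omega⟩
      rw [Nat.succ_sub_one, Nat.mul_succ, Nat.add_sub_cancel, Nat.mul_comm]
    rw [h1, Nat.mul_comm]
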